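/- For every C > 0 there exists an integer k0 such that for all k ≥ k0, all d > 0 with |d/k − 2^{k−1}·ln 2| ≤ C, all β ≥ 0, and every α with 0 < |α| ≤ 1 − 2^{−3k/4}: Λ_β(α) < Λ_β(0). -/

import Mathlib

noncomputable section

open Finset Filter Real
open scoped Classical BigOperators

/-- The set of all `k`-element subsets of `Fin n` (the potential edges of a
`k`-uniform hypergraph on `[n]`). -/
def kSets (n k : ℕ) : Finset (Finset (Fin n)) :=
  Finset.univ.filter fun e => e.card = k

/-- An edge is monochromatic under the 2-coloring `σ`. -/
def isMono {n : ℕ} (σ : Fin n → Bool) (e : Finset (Fin n)) : Prop :=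
  ∀ v ∈ e, ∀ w ∈ e, σ v = σ w

/-- The number `E_H(σ)` of monochromatic edges of the hypergraph `H` under `σ`. -/
def monoCount {n : ℕ} (H : Finset (Finset (Fin n))) (σ : Fin n → Bool) : ℕ :=
  (H.filter fun e => isMono σ e).card

/-- The partition function `Z_β(H)`. -/
def Zp {n : ℕ} (β : ℝ) (H : Finset (Finset (Fin n))) : ℝ :=
  ∑ τ : Fin n → Bool, Real.exp (-β * (monoCount H τ : ℝ))

/-- Probability of obtaining the hypergraph `H` in the binomial model `H_k(n,p)`. -/
def probHnp (n k : ℕ) (p : ℝ) (H : Finset (Finset (Fin n))) : ℝ :=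
  if H ⊆ kSets n k then p ^ H.card * (1 - p) ^ ((kSets n k).card - H.card) else 0

/-- Expectation of `f` over `H_k(n,p)`. -/
def expHnp (n k : ℕ) (p : ℝ) (f : Finset (Finset (Fin n)) → ℝ) : ℝ :=
  ∑ H : Finset (Finset (Fin n)), probHnp n k p H * f H

/-- Probability of an event under `H_k(n,p)`. -/
def prHnp (n k : ℕ) (p : ℝ) (A : Finset (Finset (Fin n)) → Prop) : ℝ :=
  expHnp n k p fun H => if A H then 1 else 0

/-- The edge probability `p = d / C(n-1,k-1)`. -/
def pEdge (n k : ℕ) (d : ℝ) : ℝ := d / ((n - 1).choose (k - 1) : ℝ)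

/-- The first-moment value `ln 2 + (d/k)·ln(1 − 2^{1−k}(1 − e^{−β}))`. -/
def phiBound (k : ℕ) (d β : ℝ) : ℝ :=
  Real.log 2 + d / k * Real.log (1 - (2:ℝ) ^ ((1:ℤ) - k) * (1 - Real.exp (-β)))

/-- The sequence `n ↦ (1/n)·E[ln Z_β(H_k(n,p))]` with `p = d/C(n-1,k-1)`. -/
def freeEnergySeq (k : ℕ) (d β : ℝ) (n : ℕ) : ℝ :=
  expHnp n k (pEdge n k d) (fun H => Real.log (Zp β H)) / n

/-- The function `Σ_{k,d}(β)`. -/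
def SigmaKD (k : ℕ) (d β : ℝ) : ℝ :=
  (β + 1) * Real.exp (-β + k * Real.log 2) * Real.log 2
    - 2 * (d / k - (2:ℝ) ^ (k - 1) * Real.log 2 + Real.log 2)

/-- `m = ⌈dn/k⌉`. -/
def mOf (d : ℝ) (k n : ℕ) : ℕ := ⌈d * n / (k:ℝ)⌉₊

/-- Number of monochromatic edges, with multiplicity, of a multi-hypergraph given as a
tuple of `m` edges. -/
def monoCountM {n m : ℕ} (H : Fin m → Finset (Fin n)) (σ : Fin n → Bool) : ℕ :=
  (Finset.univ.filter fun i : Fin m => isMono σ (H i)).card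

/-- Partition function of a multi-hypergraph. -/
def ZpM {n m : ℕ} (β : ℝ) (H : Fin m → Finset (Fin n)) : ℝ :=
  ∑ τ : Fin n → Bool, Real.exp (-β * (monoCountM H τ : ℝ))

/-- Expectation over `H'_k(n,m)`: `m` edges chosen uniformly and independently with
replacement from all `k`-subsets of `[n]`. -/
def expHM (n k m : ℕ) (f : (Fin m → Finset (Fin n)) → ℝ) : ℝ :=
  ∑ H : Fin m → Finset (Fin n),
    (∏ i : Fin m, if H i ∈ kSets n k then ((kSets n k).card : ℝ)⁻¹ else 0) * f H

/-- Probability of `H` under `H_k(n,m)`: `m` distinct edges chosen uniformly without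
replacement. -/
def probHnm (n k m : ℕ) (H : Finset (Finset (Fin n))) : ℝ :=
  if H ⊆ kSets n k ∧ H.card = m then ((kSets n k).card.choose m : ℝ)⁻¹ else 0

/-- Expectation of `f` over `H_k(n,m)`. -/
def expHnm (n k m : ℕ) (f : Finset (Finset (Fin n)) → ℝ) : ℝ :=
  ∑ H : Finset (Finset (Fin n)), probHnm n k m H * f H

/-- Number of vertices with color `true` (i.e. `|σ⁻¹(1)|`). -/
def numPlus {n : ℕ} (σ : Fin n → Bool) : ℕ :=
  (Finset.univ.filter fun v => σ v = true).card

/-- A coloring is balanced if `||σ⁻¹(1)| − n/2| ≤ √n`. -/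
def isBalanced {n : ℕ} (σ : Fin n → Bool) : Prop :=
  |(numPlus σ : ℝ) - n / 2| ≤ Real.sqrt n

/-- The overlap `⟨σ,τ⟩ = ∑_v σ(v)τ(v)`. -/
def overlap {n : ℕ} (σ τ : Fin n → Bool) : ℤ :=
  ∑ _v ∈ Finset.univ.filter (fun v : Fin n => σ v = τ v), (1:ℤ) +
    ∑ _v ∈ Finset.univ.filter (fun v : Fin n => σ v ≠ τ v), (-1:ℤ)

/-- The cluster size `C_β(H,σ)`. -/
def clusterSize {n : ℕ} (β : ℝ) (H : Finset (Finset (Fin n))) (σ : Fin n → Bool) : ℝ :=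
  ∑ τ : Fin n → Bool,
    if 2 * (n:ℝ) / 3 ≤ (overlap σ τ : ℝ) then Real.exp (-β * (monoCount H τ : ℝ)) else 0

/-- The entropy function `H(z)`. -/
def entH (z : ℝ) : ℝ := -z * Real.log z - (1 - z) * Real.log (1 - z)

/-- The second-moment exponent `Λ_β(α)`. -/
def Lam (k : ℕ) (d β α : ℝ) : ℝ :=
  entH ((1 + α) / 2) +
    d / k * Real.log (1 - (2:ℝ) ^ ((1:ℤ) - k) * (1 - Real.exp (-β)) *
      (2 - (1 - Real.exp (-β)) * ((1 + α) ^ k + (1 - α) ^ k) / 2 ^ k))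

/-- The pair partition function `Z_β(α)` with `α = 2ν/n − 1`, i.e. overlap `2ν − n`. -/
def Zpair {n m : ℕ} (β : ℝ) (ν : ℕ) (H : Fin m → Finset (Fin n)) : ℝ :=
  ∑ σ : Fin n → Bool, ∑ τ : Fin n → Bool,
    if isBalanced σ ∧ isBalanced τ ∧ overlap σ τ = 2 * (ν:ℤ) - (n:ℤ) then
      Real.exp (-β * ((monoCountM H σ : ℝ) + (monoCountM H τ : ℝ)))
    else 0

/-- Partition function of a multi-hypergraph restricted to balanced colorings. -/
def ZpMbal {n m : ℕ} (β : ℝ) (H : Fin m → Finset (Fin n)) : ℝ :=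
  ∑ τ : Fin n → Bool,
    if isBalanced τ then Real.exp (-β * (monoCountM H τ : ℝ)) else 0

/-- `m₀ = 2^{1−k}·e^{−β}·m/(1 − 2^{1−k}(1 − e^{−β}))`. -/
def m0Of (k : ℕ) (β : ℝ) (m : ℕ) : ℝ :=
  (2:ℝ) ^ ((1:ℤ) - k) * Real.exp (-β) * m / (1 - (2:ℝ) ^ ((1:ℤ) - k) * (1 - Real.exp (-β)))

/-- The probability `p₁` of a monochromatic edge in the planted model. -/
def p1Planted (n k : ℕ) (d β : ℝ) : ℝ :=
  Real.exp (-β) * d /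
    ((1 - (2:ℝ) ^ ((1:ℤ) - k) * (1 - Real.exp (-β))) * ((n - 1).choose (k - 1) : ℝ))

/-- The probability `p₂` of a bichromatic edge in the planted model. -/
def p2Planted (n k : ℕ) (d β : ℝ) : ℝ :=
  d / ((1 - (2:ℝ) ^ ((1:ℤ) - k) * (1 - Real.exp (-β))) * ((n - 1).choose (k - 1) : ℝ))

/-- Conditional probability of the hypergraph `H` in the planted model given the planted
coloring `σ`: monochromatic edges appear with probability `q1`, bichromatic ones with `q2`. -/
def probPlanted (n k : ℕ) (q1 q2 : ℝ) (σ : Fin n → Bool)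
    (H : Finset (Finset (Fin n))) : ℝ :=
  if H ⊆ kSets n k then
    (∏ e ∈ (kSets n k).filter (fun e => isMono σ e), if e ∈ H then q1 else 1 - q1) *
      ∏ e ∈ (kSets n k).filter (fun e => ¬ isMono σ e), if e ∈ H then q2 else 1 - q2
  else 0

/-- Probability of an event in the planted model `(σ̂, G)`. -/
def prPlanted (n k : ℕ) (q1 q2 : ℝ)
    (A : (Fin n → Bool) → Finset (Finset (Fin n)) → Prop) : ℝ :=
  ∑ σ : Fin n → Bool, ∑ H : Finset (Finset (Fin n)),
    ((2:ℝ)⁻¹) ^ n * probPlanted n k q1 q2 σ H * (if A σ H then 1 else 0)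

/-- `β_crit(d,k)`, as an extended real (so `⊤ = ∞` if the set is empty). -/
def betaCrit (k : ℕ) (d : ℝ) : EReal :=
  sInf ((fun β : ℝ => (β : EReal)) ''
    {β : ℝ | 0 < β ∧ limsup (freeEnergySeq k d β) atTop < phiBound k d β})

/-- `v` supports the edge `e`: `v ∈ e` and every other vertex of `e` has color `−σ(v)`. -/
def supportsEdge {n : ℕ} (σ : Fin n → Bool) (v : Fin n) (e : Finset (Fin n)) : Prop :=
  v ∈ e ∧ ∀ w ∈ e, w ≠ v → σ w = !(σ v)

/-- An edge `e` is `U`-endangered: all vertices of `U ∩ e` have the same color. -/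
def endangered {n : ℕ} (σ : Fin n → Bool) (U : Finset (Fin n)) (e : Finset (Fin n)) : Prop :=
  ∀ v ∈ U ∩ e, ∀ w ∈ U ∩ e, σ v = σ w

/-- A set `V'` satisfying the two core conditions CR1 and CR2. -/
def goodSet {n : ℕ} (H : Finset (Finset (Fin n))) (σ : Fin n → Bool)
    (V' : Finset (Fin n)) : Prop :=
  (∀ v ∈ V', 100 ≤ (H.filter fun e => supportsEdge σ v e ∧ e ⊆ V').card) ∧
    ∀ v ∈ V', (H.filter fun e => v ∈ e ∧ endangered σ V' e).card ≤ 10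

/-- The core: the largest set satisfying CR1 and CR2 (the union of all such sets). -/
def coreSet {n : ℕ} (H : Finset (Finset (Fin n))) (σ : Fin n → Bool) : Finset (Fin n) :=
  Finset.univ.filter fun v => ∃ V', goodSet H σ V' ∧ v ∈ V'

/-- The backbone: vertices outside the core supporting an edge into the core and occurring
in no `({v} ∪ core)`-endangered edge. -/
def backboneSet {n : ℕ} (H : Finset (Finset (Fin n))) (σ : Fin n → Bool) : Finset (Fin n) :=
  Finset.univ.filter fun v => v ∉ coreSet H σ ∧
    (∃ e ∈ H, supportsEdge σ v e ∧ e \ {v} ⊆ coreSet H σ) ∧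
    ∀ e ∈ H, v ∈ e → ¬ endangered σ (insert v (coreSet H σ)) e

/-- The remaining vertices. -/
def restSet {n : ℕ} (H : Finset (Finset (Fin n))) (σ : Fin n → Bool) : Finset (Fin n) :=
  Finset.univ \ (coreSet H σ ∪ backboneSet H σ)

/-- The free vertices: vertices of the rest all of whose edges meet the core in a
bichromatic set. -/
def freeSet {n : ℕ} (H : Finset (Finset (Fin n))) (σ : Fin n → Bool) : Finset (Fin n) :=
  (restSet H σ).filter fun v => ∀ e ∈ H, v ∈ e →
    ∃ w1 ∈ e ∩ coreSet H σ, ∃ w2 ∈ e ∩ coreSet H σ, σ w1 ≠ σ w2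


lemma logQ_aux {u : ℝ} (h0 : 0 ≤ u) (h1 : u < 1) :
    2*u ≤ Real.log (1+u) - Real.log (1-u) := by
  set f : ℝ → ℝ := fun t => Real.log (1+t) - Real.log (1-t) - 2*t with hf
  have key : ∀ t ∈ Set.Ioo (0:ℝ) 1, HasDerivAt f (1/(1+t) + 1/(1-t) - 2) t := by
    intro t ht
    have h1t : (1:ℝ)+t ≠ 0 := by nlinarith [ht.1]
    have h2t : (1:ℝ)-t ≠ 0 := by nlinarith [ht.2]
    have d1 : HasDerivAt (fun s : ℝ => Real.log (1+s)) (1/(1+t)) t := by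
      have := ((hasDerivAt_id t).const_add 1).log h1t
      simpa using this
    have d2 : HasDerivAt (fun s : ℝ => Real.log (1-s)) (-(1/(1-t))) t := by
      have := ((hasDerivAt_id t).const_sub 1).log h2t
      simpa [neg_div] using this
    have d3 : HasDerivAt (fun s : ℝ => 2*s) 2 t := by
      simpa using (hasDerivAt_id t).const_mul 2
    have := (d1.sub d2).sub d3
    exact this.congr_deriv (by ring)
  have hmono : MonotoneOn f (Set.Ico (0:ℝ) 1) := by
    apply monotoneOn_of_deriv_nonneg (convex_Ico 0 1)
    · apply ContinuousOn.sub
      apply ContinuousOn.sub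
      · exact (Real.continuousOn_log.comp (by fun_prop)
          (fun t ht => by simp only [Set.mem_Ico] at ht; intro h; simp at h; nlinarith [ht.1]))
      · exact (Real.continuousOn_log.comp (by fun_prop)
          (fun t ht => by simp only [Set.mem_Ico] at ht; intro h; simp at h; nlinarith [ht.2]))
      · fun_prop
    · intro t ht
      rw [interior_Ico] at ht
      exact ((key t ht).differentiableAt).differentiableWithinAt
    · intro t ht
      rw [interior_Ico] at ht
      rw [(key t ht).deriv]
      have h1t : (0:ℝ) < 1+t := by nlinarith [ht.1]
      have h2t : (0:ℝ) < 1-t := by nlinarith [ht.2]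
      have heq : 1/(1+t) + 1/(1-t) - 2 = 2*t^2/((1+t)*(1-t)) := by
        field_simp
        ring
      rw [heq]
      positivity
  have h00 : f 0 = 0 := by simp [hf]
  have := hmono (Set.mem_Ico.mpr ⟨le_refl 0, one_pos⟩) (Set.mem_Ico.mpr ⟨h0, h1⟩) h0
  rw [h00] at this
  simp only [hf] at this
  linarith

lemma pinsker_core {u : ℝ} (h0 : 0 ≤ u) (h1 : u < 1) :
    u^2 ≤ (1+u)*Real.log (1+u) + (1-u)*Real.log (1-u) := by
  set g : ℝ → ℝ := fun t => (1+t)*Real.log (1+t) + (1-t)*Real.log (1-t) - t^2 with hg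
  have key : ∀ t ∈ Set.Ioo (0:ℝ) 1,
      HasDerivAt g (Real.log (1+t) - Real.log (1-t) - 2*t) t := by
    intro t ht
    have h1t : (1:ℝ)+t ≠ 0 := by nlinarith [ht.1]
    have h2t : (1:ℝ)-t ≠ 0 := by nlinarith [ht.2]
    have e1 : HasDerivAt (fun s : ℝ => 1+s) 1 t := by simpa using (hasDerivAt_id t).const_add 1
    have e2 : HasDerivAt (fun s : ℝ => 1-s) (-1) t := by simpa using (hasDerivAt_id t).const_sub 1
    have d1 : HasDerivAt (fun s : ℝ => (1+s)*Real.log (1+s))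
        (1 * Real.log (1+t) + (1+t) * (1/(1+t))) t := e1.mul (by simpa using e1.log h1t)
    have d2 : HasDerivAt (fun s : ℝ => (1-s)*Real.log (1-s))
        ((-1) * Real.log (1-t) + (1-t) * (-1/(1-t))) t := e2.mul (by simpa [neg_div] using e2.log h2t)
    have d3 : HasDerivAt (fun s : ℝ => s^2) (2*t) t := by simpa using hasDerivAt_pow 2 t
    have := (d1.add d2).sub d3
    exact this.congr_deriv (by field_simp; ring)
  have hmono : MonotoneOn g (Set.Ico (0:ℝ) 1) := by
    apply monotoneOn_of_deriv_nonneg (convex_Ico 0 1)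
    · apply ContinuousOn.sub
      apply ContinuousOn.add
      · exact ContinuousOn.mul (by fun_prop) (Real.continuousOn_log.comp (by fun_prop)
          (fun t ht => by simp only [Set.mem_Ico] at ht; intro h; simp at h; nlinarith [ht.1]))
      · exact ContinuousOn.mul (by fun_prop) (Real.continuousOn_log.comp (by fun_prop)
          (fun t ht => by simp only [Set.mem_Ico] at ht; intro h; simp at h; nlinarith [ht.2]))
      · fun_prop
    · intro t ht
      rw [interior_Ico] at ht
      exact ((key t ht).differentiableAt).differentiableWithinAt
    · intro t ht
      rw [interior_Ico] at ht
      rw [(key t ht).deriv]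
      have := logQ_aux (le_of_lt ht.1) ht.2
      linarith
  have h00 : g 0 = 0 := by simp [hg]
  have := hmono (Set.mem_Ico.mpr ⟨le_refl 0, one_pos⟩) (Set.mem_Ico.mpr ⟨h0, h1⟩) h0
  rw [h00] at this
  simp only [hg] at this
  linarith




lemma entH_symm (x : ℝ) : entH (1-x) = entH x := by
  simp only [entH]
  ring_nf

lemma entH_half : entH (1/2 : ℝ) = Real.log 2 := by
  simp only [entH]
  rw [show (1:ℝ) - 1/2 = 1/2 by norm_num, show Real.log (1/2) = - Real.log 2 by
    rw [one_div, Real.log_inv]]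
  ring

lemma pinsker {u : ℝ} (h0 : 0 ≤ u) (h1 : u < 1) :
    entH ((1+u)/2) ≤ Real.log 2 - u^2/2 := by
  have hu1 : (0:ℝ) < 1 + u := by linarith
  have hu2 : (0:ℝ) < 1 - u := by linarith
  have l1 : Real.log ((1+u)/2) = Real.log (1+u) - Real.log 2 :=
    Real.log_div (ne_of_gt hu1) two_ne_zero
  have l2 : Real.log (1 - (1+u)/2) = Real.log (1-u) - Real.log 2 := by
    rw [show (1:ℝ) - (1+u)/2 = (1-u)/2 by ring]
    exact Real.log_div (ne_of_gt hu2) two_ne_zero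
  have hp := pinsker_core h0 h1
  simp only [entH, l1, l2]
  nlinarith

lemma entH_le {z : ℝ} (h0 : 0 < z) (h1 : z < 1) :
    entH z ≤ z * Real.log (1/z) + z := by
  have h2 : (0:ℝ) < 1 - z := by linarith
  have key : Real.log (1/(1-z)) ≤ z/(1-z) := by
    have := Real.log_le_sub_one_of_pos (show (0:ℝ) < 1/(1-z) by positivity)
    have e : 1/(1-z) - 1 = z/(1-z) := by field_simp; ring
    linarith [this, e ▸ this]
  have h3 : -(1-z) * Real.log (1-z) ≤ z := by
    have := mul_le_mul_of_nonneg_left key (le_of_lt h2)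
    rw [one_div, Real.log_inv] at this
    calc -(1-z) * Real.log (1-z) = (1-z) * -Real.log (1-z) := by ring
      _ ≤ (1-z) * (z/(1-z)) := this
      _ = z := by field_simp
  have h4 : -z * Real.log z = z * Real.log (1/z) := by
    rw [one_div, Real.log_inv]; ring
  simp only [entH]
  linarith

lemma exp_quad_le {t : ℝ} (h : |t| ≤ 1) : Real.exp t ≤ 1 + t + (3/4)*t^2 := by
  have := Real.exp_bound h (n := 2) (by norm_num)
  have hs : ∑ m ∈ Finset.range 2, t ^ m / (m.factorial : ℝ) = 1 + t := by
    simp [Finset.sum_range_succ]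
  rw [hs] at this
  have h2 : |t|^2 = t^2 := sq_abs t
  have := abs_le.mp this
  norm_num at this
  nlinarith [this.2, sq_abs t]

lemma exp_neg_quad_le {t : ℝ} (h0 : 0 ≤ t) (h1 : t ≤ 1) :
    Real.exp (-t) ≤ 1 - t + (13/18)*t^2 := by
  have habs : |(-t)| ≤ 1 := by rw [abs_neg, abs_of_nonneg h0]; exact h1
  have := Real.exp_bound habs (n := 3) (by norm_num)
  have hs : ∑ m ∈ Finset.range 3, (-t) ^ m / (m.factorial : ℝ) = 1 - t + t^2/2 := by
    simp [Finset.sum_range_succ]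
    ring
  rw [hs] at this
  have he : |(-t)| = t := by rw [abs_neg, abs_of_nonneg h0]
  rw [he] at this
  have h2 := (abs_le.mp this).2
  norm_num [Nat.factorial] at h2
  nlinarith [pow_le_pow_left₀ h0 h1 3, h2]

lemma sq_le_two_pow {n : ℕ} (hn : 8 ≤ n) : (2*n)^2 ≤ 2^n := by
  induction n, hn using Nat.le_induction with
  | base => norm_num
  | succ n hn ih =>
    have : (2*(n+1))^2 ≤ 2 * (2*n)^2 := by nlinarith
    calc (2*(n+1))^2 ≤ 2 * (2*n)^2 := this
      _ ≤ 2 * 2^n := by omega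
      _ = 2^(n+1) := by ring

lemma aux_sqP {P a : ℝ} (h1 : 4*a^2 ≤ P) (h2 : 10^9 ≤ a) : 2000 ≤ P := by nlinarith

lemma aux_CleRpow {C : ℝ} (hC : 0 < C) : C ≤ (2:ℝ)^(8*C) := by
  rw [Real.rpow_def_of_pos two_pos]
  have h1 := Real.add_one_le_exp (Real.log 2 * (8*C))
  have h2 : (0.6931471803:ℝ) < Real.log 2 := Real.log_two_gt_d9
  nlinarith

lemma aux_CleRpow2 {C : ℝ} (hC : 0 < C) : 2*C + 2 ≤ (2:ℝ)^(8*C+1) := by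
  have h1 : (2:ℝ)^(8*C+1) = 2^(8*C) * 2 := by
    rw [Real.rpow_add two_pos, Real.rpow_one]
  rw [h1, Real.rpow_def_of_pos two_pos]
  have h2 := Real.add_one_le_exp (Real.log 2 * (8*C))
  have h3 : (0.6931471803:ℝ) < Real.log 2 := Real.log_two_gt_d9
  nlinarith

lemma aux_A1q {C q : ℝ} (hC : 0 < C) (hq : 0 < q) (hqs : q ≤ 1/1000) :
    (Real.log 2 + C*q)/(1-q)^2 * (1-q) ≤ Real.log 2 + (2*C+2)*q := by
  have hu : Real.log 2 < 0.6931471808 := Real.log_two_lt_d9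
  have hl : (0.6931471803:ℝ) < Real.log 2 := Real.log_two_gt_d9
  have h1q : (0:ℝ) < 1-q := by linarith
  have he : (Real.log 2 + C*q)/(1-q)^2 * (1-q) = (Real.log 2 + C*q)/(1-q) := by
    field_simp
  rw [he, div_le_iff₀ h1q]
  nlinarith [mul_pos hC hq, mul_nonneg (mul_pos hC hq).le hq.le]

lemma aux_prod_lb {a b : ℝ} (ha : 10^9 ≤ a) (hb : (0.6931471803:ℝ) < b) :
    6*10^8 ≤ a*b := by nlinarith

lemma aux_Ipos {q lam S : ℝ} (hq : 0 < q) (hqs : q ≤ 1/1000) (hl0 : 0 ≤ lam)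
    (hl1 : lam ≤ 1) (hS0 : 0 ≤ S) (hS1 : S ≤ 1) :
    1/2 ≤ 1 - q*lam*(2 - lam*S) := by
  have hls : lam*S ≤ 1 := mul_le_one₀ hl1 hS0 hS1
  have hls0 : 0 ≤ lam*S := mul_nonneg hl0 hS0
  have h2 : lam*(2 - lam*S) ≤ 2 := by nlinarith
  have h3 : 0 ≤ lam*(2 - lam*S) := by nlinarith
  have h4 : q*(lam*(2-lam*S)) ≤ q*2 := mul_le_mul_of_nonneg_left h2 (le_of_lt hq)
  nlinarith

lemma aux_A_ge {q c : ℝ} (hq : 0 < q) (hqs : q ≤ 1/1000) (hc : 0 ≤ c) :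
    Real.log 2 ≤ (Real.log 2 + c)/(1-q)^2 := by
  have hl : (0.6931471803:ℝ) < Real.log 2 := Real.log_two_gt_d9
  rw [le_div_iff₀ (pow_pos (by linarith : (0:ℝ) < 1-q) 2)]
  have h1 : (1-q)^2 ≤ 1 := by nlinarith
  nlinarith [mul_le_mul_of_nonneg_left h1 (by linarith : (0:ℝ) ≤ Real.log 2)]

lemma aux_A_le {q c : ℝ} (hq : 0 < q) (hqs : q ≤ 1/1000) (hc : c ≤ 1/1000) :
    (Real.log 2 + c)/(1-q)^2 ≤ 7/10 := by
  have hu : Real.log 2 < 0.6931471808 := Real.log_two_lt_d9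
  rw [div_le_iff₀ (pow_pos (by linarith : (0:ℝ) < 1-q) 2)]
  nlinarith [sq_nonneg q]

lemma aux_ratio {q lam S : ℝ} (hq : 0 < q) (hqs : q ≤ 1/1000) (hl0 : 0 ≤ lam)
    (hl1 : lam ≤ 1) (hSq : q ≤ S) :
    q*lam^2*(S-q)/((1-q*lam)^2) ≤ q*(S-q)/(1-q)^2 := by
  have hql : q*lam ≤ q := mul_le_of_le_one_right (le_of_lt hq) hl1
  have h1 : lam*(1-q) ≤ 1 - q*lam := by nlinarith
  have h2 : 0 ≤ lam*(1-q) := mul_nonneg hl0 (by linarith)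
  have key : lam^2*(1-q)^2 ≤ (1-q*lam)^2 := by
    have := pow_le_pow_left₀ h2 h1 2
    calc lam^2*(1-q)^2 = (lam*(1-q))^2 := by ring
      _ ≤ (1-q*lam)^2 := this
  rw [div_le_div_iff₀ (pow_pos (by linarith : (0:ℝ) < 1-q*lam) 2)
    (pow_pos (by linarith : (0:ℝ) < 1-q) 2)]
  have h3 := mul_le_mul_of_nonneg_left key
    (mul_nonneg (le_of_lt hq) (by linarith : (0:ℝ) ≤ S - q))
  nlinarith [h3]

set_option maxHeartbeats 2000000 in
theorem statement_11 (C : ℝ) (hC : 0 < C) :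
    ∃ k0 : ℕ, ∀ k : ℕ, k0 ≤ k → ∀ d : ℝ, 0 < d →
      |d / k - (2:ℝ) ^ (k - 1) * Real.log 2| ≤ C → ∀ β : ℝ, 0 ≤ β →
      ∀ α : ℝ, α ≠ 0 → |α| ≤ 1 - (2:ℝ) ^ (-(3 * (k:ℝ) / 4)) →
        Lam k d β α < Lam k d β 0 := by
  refine ⟨10^9 + 64*⌈C⌉₊, fun k hk d hd hdC β hβ α hα0 hα1 => ?_⟩
  have hlog2l : (0.6931471803:ℝ) < Real.log 2 := Real.log_two_gt_d9
  have hlog2u : Real.log 2 < 0.6931471808 := Real.log_two_lt_d9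
  -- basic k facts
  have hk9 : 10^9 ≤ k := le_trans (by omega) hk
  have hK9 : (10^9:ℝ) ≤ (k:ℝ) := by exact_mod_cast hk9
  have hK1 : (1:ℝ) ≤ (k:ℝ) := by linarith
  have hKpos : (0:ℝ) < (k:ℝ) := by linarith
  have hk0 : k ≠ 0 := by omega
  have hKC : 64*C ≤ (k:ℝ) - 10^9 := by
    have h1 : (10^9 + 64*⌈C⌉₊ : ℕ) ≤ k := hk
    have h2 : C ≤ (⌈C⌉₊ : ℝ) := Nat.le_ceil C
    have h3 : ((10^9 + 64*⌈C⌉₊ : ℕ) : ℝ) ≤ (k:ℝ) := by exact_mod_cast h1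
    push_cast at h3
    linarith
  -- powers of two
  have h2k : (0:ℝ) < 2^k := by positivity
  have h4k2 : 4*(k:ℝ)^2 ≤ 2^k := by
    have h1 := sq_le_two_pow (n := k) (by omega)
    have h2 : ((2*(k:ℝ))^2 : ℝ) ≤ (2:ℝ)^k := by exact_mod_cast h1
    calc 4*(k:ℝ)^2 = (2*(k:ℝ))^2 := by ring
      _ ≤ 2^k := h2
  set K := (k:ℝ) with hKdef
  -- q
  set q : ℝ := (2:ℝ)^((1:ℤ) - (k:ℤ)) with hqdef
  have hq_eq : q = 2/2^k := by
    rw [hqdef, zpow_sub₀ (by norm_num : (2:ℝ) ≠ 0), zpow_one, zpow_natCast]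
  have hq_pos : 0 < q := by rw [hq_eq]; positivity
  have hq_rpow : q = (2:ℝ)^((1:ℝ) - K) := by
    rw [hq_eq, Real.rpow_sub two_pos, Real.rpow_one, Real.rpow_natCast]
  have hq_small : q ≤ 1/1000 := by
    rw [hq_eq]
    rw [div_le_div_iff₀ h2k (by norm_num)]
    have := aux_sqP h4k2 hK9
    linarith
  -- C * q bounds
  have h2_8C : C ≤ (2:ℝ)^(8*C) := aux_CleRpow hC
  have h2C2 : 2*C + 2 ≤ (2:ℝ)^(8*C+1) := aux_CleRpow2 hC
  have hrpow_mono : ∀ a b : ℝ, a ≤ b → (2:ℝ)^a ≤ (2:ℝ)^b := fun a b hab =>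
    Real.rpow_le_rpow_of_exponent_le one_le_two hab
  have hCq : C*q ≤ 1/1000 := by
    have h1 : C ≤ (2:ℝ)^(K-20) := le_trans h2_8C (hrpow_mono _ _ (by linarith))
    have h2 : C*q ≤ (2:ℝ)^(K-20) * (2:ℝ)^(1-K) := by
      rw [hq_rpow]
      exact mul_le_mul h1 le_rfl (le_of_lt (Real.rpow_pos_of_pos two_pos _)) (by positivity)
    rw [← Real.rpow_add two_pos] at h2
    norm_num at h2
    linarith
  -- δ
  set δ : ℝ := (2:ℝ)^(-(3 * K / 4)) with hδdef
  have hδ_pos : 0 < δ := Real.rpow_pos_of_pos two_pos _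
  have hδ_le1 : δ ≤ 1 := Real.rpow_le_one_of_one_le_of_nonpos one_le_two (by linarith)
  have hε₀δ : (2*C+2)*q ≤ δ/2 := by
    have h1 : 2*C+2 ≤ (2:ℝ)^(K/4 - 2) := le_trans h2C2 (hrpow_mono _ _ (by linarith))
    have h2 : (2*C+2)*q ≤ (2:ℝ)^(K/4-2) * (2:ℝ)^(1-K) := by
      rw [hq_rpow]
      exact mul_le_mul h1 le_rfl (by positivity) (by positivity)
    rw [← Real.rpow_add two_pos] at h2
    have h3 : (K/4 - 2 + (1 - K)) = -(3*K/4) + (-1) := by ring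
    rw [h3, Real.rpow_add two_pos, Real.rpow_neg_one] at h2
    rw [hδdef]
    linarith [h2]
  -- x and basic range facts
  have hαabs := abs_le.mp hα1
  have hα1' : |α| ≤ 1 := le_trans hα1 (by linarith)
  set lam : ℝ := 1 - Real.exp (-β) with hlamdef
  have hlam0 : 0 ≤ lam := by
    have : Real.exp (-β) ≤ 1 := Real.exp_le_one_iff.mpr (by linarith)
    rw [hlamdef]; linarith
  have hlam1 : lam ≤ 1 := by
    have := Real.exp_pos (-β); rw [hlamdef]; linarith
  set x : ℝ := (1+α)/2 with hxdef
  have hx0 : δ/2 ≤ x := by rw [hxdef]; linarith [hαabs.1, hαabs.2]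
  have hx1 : x ≤ 1 - δ/2 := by rw [hxdef]; linarith [hαabs.1, hαabs.2]
  have hx_pos : 0 < x := by linarith
  have hx_lt1 : x < 1 := by linarith
  set S : ℝ := x^k + (1-x)^k with hSdef
  have hSα : ((1+α)^k + (1-α)^k) = 2^k * S := by
    rw [hSdef, show (1:ℝ)+α = 2*x by rw [hxdef]; ring,
      show (1:ℝ)-α = 2*(1-x) by rw [hxdef]; ring, mul_pow, mul_pow]
    ring
  -- S bounds
  have hS1 : S ≤ 1 := by
    rw [hSdef]
    have h1 : x^k ≤ x := pow_le_of_le_one (le_of_lt hx_pos) (le_of_lt hx_lt1) hk0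
    have h2 : (1-x)^k ≤ 1-x := pow_le_of_le_one (by linarith) (by linarith) hk0
    linarith
  have hSq : q ≤ S := by
    have hcv := (convexOn_pow (𝕜 := ℝ) k).2 (Set.mem_Ici.mpr (le_of_lt hx_pos))
      (Set.mem_Ici.mpr (show (0:ℝ) ≤ 1-x by linarith))
      (by norm_num : (0:ℝ) ≤ 1/2) (by norm_num : (0:ℝ) ≤ 1/2) (by norm_num)
    simp only [smul_eq_mul] at hcv
    have he : (1/2:ℝ) * x + (1/2) * (1-x) = 1/2 := by ring
    rw [he] at hcv
    have h12 : ((1:ℝ)/2)^k = 1/2^k := by rw [div_pow, one_pow]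
    rw [h12] at hcv
    rw [hq_eq, hSdef]
    rw [div_le_iff₀ h2k]
    rw [div_le_iff₀ h2k] at hcv
    linarith [hcv]
  have hSq0 : 0 ≤ S - q := by linarith
  -- the two log arguments
  set Iα : ℝ := 1 - q*lam*(2 - lam*S) with hIαdef
  set I0 : ℝ := 1 - q*lam*(2 - lam*q) with hI0def
  have hIα_pos : 1/2 ≤ Iα := by
    rw [hIαdef]
    exact aux_Ipos hq_pos hq_small hlam0 hlam1 (le_trans (le_of_lt hq_pos) hSq) hS1
  have hI0_pos : 1/2 ≤ I0 := by
    rw [hI0def]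
    exact aux_Ipos hq_pos hq_small hlam0 hlam1 (le_of_lt hq_pos) (by linarith [hq_small])
  have hI0_sq : I0 = (1 - q*lam)^2 := by rw [hI0def]; ring
  -- rewrite the goal
  have hgoalrw : Lam k d β α = entH x + d/K * Real.log Iα := by
    simp only [Lam, hIαdef]
    rw [hSα]
    rw [show lam * (2^k * S) / 2^k = lam * S by field_simp]
  have hgoalrw0 : Lam k d β 0 = Real.log 2 + d/K * Real.log I0 := by
    simp only [Lam, hI0def]
    norm_num
    rw [show (1:ℝ) - Real.exp (-β) = lam from rfl]
    rw [show lam * 2 / 2^k = lam * q by rw [hq_eq]; ring]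
    rw [entH_half]
  rw [hgoalrw, hgoalrw0]
  -- log difference bound
  have hIα_pos' : (0:ℝ) < Iα := by linarith
  have hI0_pos' : (0:ℝ) < I0 := by linarith
  have hlogd : Real.log Iα - Real.log I0 ≤ (Iα - I0)/I0 := by
    have h1 := Real.log_le_sub_one_of_pos (show (0:ℝ) < Iα/I0 by positivity)
    rw [Real.log_div (ne_of_gt hIα_pos') (ne_of_gt hI0_pos')] at h1
    have h2 : Iα/I0 - 1 = (Iα - I0)/I0 := by field_simp
    linarith
  have hdiff : Iα - I0 = q*lam^2*(S - q) := by rw [hIαdef, hI0def]; ring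
  set A : ℝ := (Real.log 2 + C*q)/(1-q)^2 with hAdef
  have h1q : (1/2:ℝ) ≤ 1 - q := by linarith [hq_small]
  have hA_ln2 : Real.log 2 ≤ A :=
    aux_A_ge hq_pos hq_small (le_of_lt (mul_pos hC hq_pos))
  have hA7 : A ≤ 7/10 := aux_A_le hq_pos hq_small hCq
  have hA_pos : 0 < A := by linarith [hA_ln2]
  -- main bound : d/K * (log Iα - log I0) ≤ A * (S - q)
  have hmain : d/K * Real.log Iα - d/K * Real.log I0 ≤ A * (S - q) := by
    have hdk0 : 0 ≤ d/K := by positivity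
    have s1 : d/K * Real.log Iα - d/K * Real.log I0 ≤ d/K * ((Iα - I0)/I0) := by
      rw [← mul_sub]
      exact mul_le_mul_of_nonneg_left hlogd hdk0
    have s2 : (Iα - I0)/I0 ≤ q*(S-q)/(1-q)^2 := by
      rw [hdiff, hI0_sq]
      exact aux_ratio hq_pos hq_small hlam0 hlam1 hSq
    have s3 : d/K * ((Iα - I0)/I0) ≤ d/K * (q*(S-q)/(1-q)^2) :=
      mul_le_mul_of_nonneg_left s2 hdk0
    have hdku : d/K ≤ 2^(k-1) * Real.log 2 + C := by
      have := (abs_le.mp hdC).2; linarith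
    have hpow1 : (2:ℝ)^(k-1) * q = 1 := by
      rw [hq_eq]
      rw [show (2:ℝ)^k = 2^(k-1) * 2 by rw [← pow_succ]; congr 1; omega]
      field_simp
    have s4 : d/K * (q*(S-q)/(1-q)^2) ≤ A * (S-q) := by
      rw [hAdef]
      rw [show d/K * (q*(S-q)/(1-q)^2) = (d/K*q) * (S-q) / (1-q)^2 by ring]
      rw [show (Real.log 2 + C*q)/(1-q)^2 * (S-q) = (Real.log 2 + C*q) * (S-q) / (1-q)^2 by ring]
      apply div_le_div_of_nonneg_right _ (le_of_lt (pow_pos (by linarith [hq_small] : (0:ℝ) < 1-q) 2))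
      apply mul_le_mul_of_nonneg_right _ hSq0
      have : d/K*q ≤ (2^(k-1) * Real.log 2 + C)*q :=
        mul_le_mul_of_nonneg_right hdku (le_of_lt hq_pos)
      calc d/K*q ≤ (2^(k-1) * Real.log 2 + C)*q := this
        _ = (2^(k-1)*q) * Real.log 2 + C*q := by ring
        _ = Real.log 2 + C*q := by rw [hpow1]; ring
    exact le_trans (le_trans s1 s3) s4
  clear_value K q δ lam x S Iα I0 A
  have hsuff : entH x + A * (S - q) < Real.log 2 → entH x + d/K*Real.log Iα < Real.log 2 + d/K*Real.log I0 := by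
    intro h
    linarith
  apply hsuff
  -- ===== case analysis =====
  -- z = min(x, 1-x)
  set z : ℝ := min x (1-x) with hzdef
  have hzcases : (entH x = entH z ∧ S = z^k + (1-z)^k) := by
    rcases le_total x (1-x) with hle | hle
    · have hz : z = x := min_eq_left hle
      refine ⟨by rw [hz], by rw [hSdef, hz]⟩
    · have hz : z = 1-x := min_eq_right hle
      refine ⟨by rw [hz, entH_symm], ?_⟩
      rw [hSdef, hz, show (1:ℝ)-(1-x) = x by ring]
      ring
  obtain ⟨hentHz, hSz⟩ := hzcases
  have hz0 : δ/2 ≤ z := le_min hx0 (by linarith)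
  have hz_pos : 0 < z := lt_of_lt_of_le (by linarith) hz0
  have hz_half : z ≤ 1/2 := by
    rcases le_total x (1-x) with hle | hle
    · rw [hzdef, min_eq_left hle]; linarith
    · rw [hzdef, min_eq_right hle]; linarith
  have hzu : 1 - 2*z = |α| := by
    rcases le_or_gt 0 α with h | h
    · have hle : 1-x ≤ x := by rw [hxdef]; linarith
      rw [hzdef, min_eq_right hle, hxdef, abs_of_nonneg h]; ring
    · have hle : x ≤ 1-x := by rw [hxdef]; linarith
      rw [hzdef, min_eq_left hle, hxdef, abs_of_neg h]; ring
  clear_value z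
  have hαpos : 0 < |α| := abs_pos.mpr hα0
  have hzlt : z < 1/2 := by linarith
  -- Pinsker at z
  have hpz : entH z ≤ Real.log 2 - (1-2*z)^2/2 := by
    have hp := pinsker (u := 1-2*z) (by linarith) (by linarith)
    rw [show ((1:ℝ)+(1-2*z))/2 = 1-z by ring, entH_symm z] at hp
    exact hp
  -- (1-z)^k ≤ exp(-(K*z))
  have hek : (1-z)^k ≤ Real.exp (-(K*z)) := by
    have h1 : 1-z ≤ Real.exp (-z) := by have := Real.add_one_le_exp (-z); linarith
    have h2 : (1-z)^k ≤ (Real.exp (-z))^k := pow_le_pow_left₀ (by linarith) h1 k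
    rwa [← Real.exp_nat_mul, show ((k:ℝ)) * (-z) = -(K*z) by rw [hKdef]; ring] at h2
  have hzk_le : z^k ≤ z := pow_le_of_le_one hz_pos.le (by linarith) hk0
  have hzk_pos : 0 < z^k := pow_pos hz_pos k
  rcases le_or_gt (|α|) (1/K) with hsm | hbig
  · -- Case C1 : |α| ≤ 1/K
    have hα2 : 0 < α^2 := by positivity
    have hKα : |K*α| ≤ 1 := by
      rw [abs_mul, abs_of_pos hKpos]
      calc K*|α| ≤ K*(1/K) := mul_le_mul_of_nonneg_left hsm hKpos.le
        _ = 1 := by field_simp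
    have hαle1 : -1 ≤ α ∧ α ≤ 1 := abs_le.mp hα1'
    have e1 : (1+α)^k ≤ Real.exp (K*α) := by
      have h1 : 1+α ≤ Real.exp α := by have := Real.add_one_le_exp α; linarith
      have h2 : (1+α)^k ≤ (Real.exp α)^k := pow_le_pow_left₀ (by linarith [hαle1.1]) h1 k
      rwa [← Real.exp_nat_mul, show ((k:ℝ)) * α = K*α by rw [hKdef]] at h2
    have e2 : (1-α)^k ≤ Real.exp (-(K*α)) := by
      have h1 : 1-α ≤ Real.exp (-α) := by have := Real.add_one_le_exp (-α); linarith
      have h2 : (1-α)^k ≤ (Real.exp (-α))^k := pow_le_pow_left₀ (by linarith [hαle1.2]) h1 k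
      rwa [← Real.exp_nat_mul, show ((k:ℝ)) * (-α) = -(K*α) by rw [hKdef]; ring] at h2
    have q1 := exp_quad_le hKα
    have q2 : Real.exp (-(K*α)) ≤ 1 - K*α + (3/4)*(K*α)^2 := by
      have h := exp_quad_le (t := -(K*α)) (by rwa [abs_neg])
      rw [show (-(K*α))^2 = (K*α)^2 by ring] at h
      linarith
    have hq2k : q*2^k = 2 := by rw [hq_eq]; field_simp
    have hS2k : S*2^k = (1+α)^k + (1-α)^k := by rw [hSα]; ring
    have hSb : S - q ≤ (3/2)*K^2*α^2/2^k := by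
      rw [le_div_iff₀ h2k]
      have : (S-q)*2^k = (1+α)^k + (1-α)^k - 2 := by
        rw [sub_mul, hS2k, hq2k]
      rw [this]
      linarith only [e1, e2, q1, q2]
    have hAS : A*(S-q) ≤ (21/80)*α^2 := by
      have h1 : A*(S-q) ≤ (7/10)*(S-q) := mul_le_mul_of_nonneg_right hA7 hSq0
      have h3 : (3/2)*K^2*α^2/2^k ≤ (3/8)*α^2 := by
        rw [div_le_iff₀ h2k]
        linarith only [mul_le_mul_of_nonneg_left h4k2 (sq_nonneg α)]
      linarith only [h1, hSb, h3, hSq0]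
    have hent : entH x ≤ Real.log 2 - α^2/2 := by
      rw [hentHz]
      rw [hzu] at hpz
      rw [sq_abs] at hpz
      linarith only [hpz]
    linarith only [hent, hAS, hα2]
  · rcases le_or_gt z (1/K) with hz4 | hz3
    · -- Case C4 : z ≤ 1/K
      have hKz0 : 0 ≤ K*z := by positivity
      have hKz1 : K*z ≤ 1 := by
        calc K*z ≤ K*(1/K) := mul_le_mul_of_nonneg_left hz4 hKpos.le
          _ = 1 := by field_simp
      have heq := exp_neg_quad_le hKz0 hKz1
      have hSu : S - q ≤ 1 - K*z + (13/18)*(K*z)^2 + z^k - q := by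
        rw [hSz]
        linarith only [hek, heq]
      have b1 : A*(1-q) ≤ Real.log 2 + (2*C+2)*q := by
        rw [hAdef]
        exact aux_A1q hC hq_pos hq_small
      have b2 : Real.log 2*(K*z) ≤ A*(K*z) := mul_le_mul_of_nonneg_right hA_ln2 hKz0
      have b3 : (13/18)*(A*(K*z)^2) ≤ (91/180)*(K*z)^2 := by
        have := mul_le_mul_of_nonneg_right hA7 (sq_nonneg (K*z))
        linarith
      have b4 : A*z^k ≤ z^k := by
        have := mul_le_mul_of_nonneg_right hA7 hzk_pos.le
        linarith
      have hAS : A*(S - q) ≤ Real.log 2 + (2*C+2)*q - Real.log 2*(K*z)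
          + (91/180)*(K*z)^2 + z^k := by
        have h0 : A*(S-q) ≤ A*(1 - K*z + (13/18)*(K*z)^2 + z^k - q) :=
          mul_le_mul_of_nonneg_left hSu hA_pos.le
        have h1 : A*(1 - K*z + (13/18)*(K*z)^2 + z^k - q)
            = A*(1-q) - A*(K*z) + (13/18)*(A*(K*z)^2) + A*z^k := by ring
        linarith
      have hε : (2*C+2)*q ≤ z := le_trans hε₀δ hz0
      have hentz := entH_le hz_pos (by linarith : z < 1)
      -- numeric core
      have hnum : Real.log (1/z) + 3 + (91/180)*(K^2*z) < Real.log 2 * K := by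
        have hKl : (6:ℝ)*10^8 ≤ K * Real.log 2 := aux_prod_lb hK9 hlog2l
        rcases le_or_gt z (1/K^2) with hza | hzb
        · have hl1 : Real.log (1/z) ≤ Real.log (2/δ) := by
            apply Real.log_le_log (by positivity)
            rw [div_le_div_iff₀ hz_pos hδ_pos]
            linarith [hz0]
          have hl2 : Real.log (2/δ) = Real.log 2 + (3*K/4)*Real.log 2 := by
            rw [Real.log_div two_ne_zero (ne_of_gt hδ_pos), hδdef,
              Real.log_rpow two_pos]
            ring
          have hK2z : K^2*z ≤ 1 := by
            calc K^2*z ≤ K^2*(1/K^2) := mul_le_mul_of_nonneg_left hza (by positivity)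
              _ = 1 := by field_simp
          linarith only [hl1, hl2, hK2z, hKl, hlog2u, hlog2l]
        · have h1z : 1/z ≤ K^2 := by
            rw [div_le_iff₀ hz_pos]
            have := mul_lt_mul_of_pos_left hzb (by positivity : (0:ℝ) < K^2)
            rw [mul_one_div, div_self (by positivity : (K:ℝ)^2 ≠ 0)] at this
            linarith
          have hl1 : Real.log (1/z) ≤ Real.log (K^2) :=
            Real.log_le_log (by positivity) h1z
          have hl2 : Real.log (K^2) = 2*Real.log K := by
            rw [sq, Real.log_mul (ne_of_gt hKpos) (ne_of_gt hKpos)]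
            ring
          have hlogK : Real.log K ≤ 2*Real.sqrt K := by
            have h1 : Real.log K = 2*Real.log (Real.sqrt K) := by
              rw [Real.log_sqrt hKpos.le]; ring
            have h2 : Real.log (Real.sqrt K) ≤ Real.sqrt K - 1 :=
              Real.log_le_sub_one_of_pos (Real.sqrt_pos.mpr hKpos)
            linarith [Real.sqrt_nonneg K]
          have hsq : (31622:ℝ) ≤ Real.sqrt K := by
            rw [show (31622:ℝ) = Real.sqrt (31622^2) by
              rw [Real.sqrt_sq (by norm_num)]]
            apply Real.sqrt_le_sqrt
            norm_num
            linarith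
          have hsqK : Real.sqrt K ≤ K/31622 := by
            have h1 : Real.sqrt K * Real.sqrt K = K := Real.mul_self_sqrt hKpos.le
            have h2 : 31622*Real.sqrt K ≤ Real.sqrt K * Real.sqrt K :=
              mul_le_mul_of_nonneg_right hsq (Real.sqrt_nonneg K)
            rw [h1] at h2
            linarith
          have hK2zb : K^2*z ≤ K := by
            calc K^2*z ≤ K^2*(1/K) := mul_le_mul_of_nonneg_left hz4 (by positivity)
              _ = K := by field_simp
          have hKlog2 : 0.6931471803*K ≤ Real.log 2*K :=
            mul_le_mul_of_nonneg_right hlog2l.le hKpos.le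
          linarith only [hlogK, hsqK, hl1, hl2, hK2zb, hKlog2, hK9]
      have hmul := mul_lt_mul_of_pos_left hnum hz_pos
      rw [hentHz]
      linarith only [hmul, hentz, hAS, hε, hzk_le]
    · rcases le_or_gt z (1/100) with hzle100 | hzgt100
      · -- Case C3 : 1/K < z ≤ 1/100
        have hkz1 : 1 < K*z := by
          have := mul_lt_mul_of_pos_left hz3 hKpos
          rw [mul_one_div, div_self (ne_of_gt hKpos)] at this
          linarith
        have hexp : Real.exp (-(K*z)) ≤ Real.exp (-1) := by
          apply Real.exp_le_exp.mpr
          linarith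
        have hexp1 : Real.exp (-1:ℝ) ≤ 1/(2.7:ℝ) := by
          rw [Real.exp_neg]
          have h1 : (2.7:ℝ) ≤ Real.exp 1 := by linarith [Real.exp_one_gt_d9]
          rw [inv_le_comm₀ (Real.exp_pos 1) (by norm_num)]
          calc (1/(2.7:ℝ))⁻¹ = 2.7 := by norm_num
            _ ≤ Real.exp 1 := h1
        have hS_le : S ≤ 1/(2.7:ℝ) + 1/100 := by
          rw [hSz]
          linarith only [hek, hexp, hexp1, hzk_le, hzle100]
        have hAS : A*(S - q) ≤ (7/10)*(1/(2.7:ℝ) + 1/100) := by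
          have h1 : A*(S-q) ≤ (7/10)*(S-q) := mul_le_mul_of_nonneg_right hA7 hSq0
          have h2 : (7/10:ℝ)*(S-q) ≤ (7/10)*(1/(2.7:ℝ)+1/100) := by
            apply mul_le_mul_of_nonneg_left _ (by norm_num)
            linarith [hq_pos]
          linarith
        have hq49 : (49/50:ℝ) ≤ 1-2*z := by linarith only [hzle100]
        have hq49sq : (49/50:ℝ)^2 ≤ (1-2*z)^2 := pow_le_pow_left₀ (by norm_num) hq49 2
        rw [hentHz]
        linarith only [hpz, hAS, hq49sq]
      · -- Case C2 : z > 1/100, |α| > 1/K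
        have hα2 : 1/K^2 < α^2 := by
          have h1 : (1/K)^2 < |α|^2 := by
            apply pow_lt_pow_left₀ hbig (by positivity)
            norm_num
          rw [sq_abs] at h1
          calc 1/K^2 = (1/K)^2 := by rw [div_pow]; norm_num
            _ < α^2 := h1
        have hexpK : Real.exp (-(K*z)) ≤ (27/1000)*(1/K^2) := by
          have h1 : K/300 ≤ Real.exp (K/300) := by
            have := Real.add_one_le_exp (K/300); linarith
          have h2 : (K/300)^3 ≤ (Real.exp (K/300))^3 := pow_le_pow_left₀ (by positivity) h1 3
          have h3 : (Real.exp (K/300))^3 = Real.exp (K/100) := by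
            rw [← Real.exp_nat_mul]
            congr 1
            push_cast
            ring
          rw [h3] at h2
          have h4 : Real.exp (-(K*z)) ≤ Real.exp (-(K/100)) := by
            apply Real.exp_le_exp.mpr
            have h4a := mul_le_mul_of_nonneg_left hzgt100.le hKpos.le
            linarith only [h4a]
          have h5 : Real.exp (-(K/100)) ≤ 27000000/K^3 := by
            rw [Real.exp_neg]
            have hpos : (0:ℝ) < (K/300)^3 := by positivity
            have h6 : (Real.exp (K/100))⁻¹ ≤ ((K/300)^3)⁻¹ :=
              inv_anti₀ hpos h2
            calc (Real.exp (K/100))⁻¹ ≤ ((K/300)^3)⁻¹ := h6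
              _ = 27000000/K^3 := by
                rw [div_pow]
                rw [inv_div]
                norm_num
          have h7 : 27000000/K^3 ≤ (27/1000)*(1/K^2) := by
            rw [div_le_iff₀ (by positivity : (0:ℝ) < K^3)]
            rw [show (27/1000:ℝ)*(1/K^2)*K^3 = (27/1000)*(K^3/K^2) by ring]
            rw [show (K:ℝ)^3/K^2 = K by field_simp]
            linarith only [hK9]
          linarith
        have hzkK : z^k ≤ (1/4)*(1/K^2) := by
          have h1 : z^k ≤ (1/2:ℝ)^k := pow_le_pow_left₀ hz_pos.le hz_half k
          have h2 : ((1:ℝ)/2)^k = 1/2^k := by rw [div_pow, one_pow]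
          have h3 : (1:ℝ)/2^k ≤ 1/(4*K^2) := by
            apply one_div_le_one_div_of_le (by positivity) h4k2
          calc z^k ≤ 1/2^k := by rw [← h2]; exact h1
            _ ≤ 1/(4*K^2) := h3
            _ = (1/4)*(1/K^2) := by ring
        have hS_small : S - q ≤ (27/1000)*(1/K^2) + (1/4)*(1/K^2) := by
          rw [hSz]
          linarith only [hek, hexpK, hzkK, hq_pos]
        have hAS : A*(S-q) ≤ (7/10)*((27/1000)*(1/K^2) + (1/4)*(1/K^2)) := by
          have h1 : A*(S-q) ≤ (7/10)*(S-q) := mul_le_mul_of_nonneg_right hA7 hSq0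
          have h2 : (7/10:ℝ)*(S-q) ≤ (7/10)*((27/1000)*(1/K^2) + (1/4)*(1/K^2)) :=
            mul_le_mul_of_nonneg_left hS_small (by norm_num)
          linarith
        have hent : entH z ≤ Real.log 2 - α^2/2 := by
          rw [hzu] at hpz
          rw [sq_abs] at hpz
          linarith
        have h1K2 : (0:ℝ) < 1/K^2 := by positivity
        rw [hentHz]
        linarith only [hα2, hAS, hent, h1K2]
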